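/- As R → ∞, ∫_{B_R(0)} ‖∇φ₀‖² dx - 16π·log(1 + πhR²) tends to -16π, where φ₀(x) = -2 log(1 + πh‖x‖²) and h > 0 is constant. -/

import Mathlib

open Real Filter
open MeasureTheory

local notation "E2" => EuclideanSpace ℝ (Fin 2)

lemma grad_bubble (a : ℝ) (ha : 0 < a) (x : E2) :
    HasGradientAt (fun y : E2 => -2 * Real.log (1 + a * ‖y‖ ^ 2))
      ((-4 * a / (1 + a * ‖x‖ ^ 2)) • x) x := by
  have hpos : (0:ℝ) < 1 + a * ‖x‖ ^ 2 := by positivity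
  have h1 : HasFDerivAt (fun y : E2 => ‖y‖ ^ 2) (2 • (innerSL ℝ x)) x := by
    simpa using (hasFDerivAt_id x).norm_sq
  have h2 : HasDerivAt (fun t : ℝ => -2 * Real.log (1 + a * t))
      (-2 * (a / (1 + a * ‖x‖ ^ 2))) (‖x‖ ^ 2) := by
    have hin : HasDerivAt (fun t : ℝ => 1 + a * t) a (‖x‖ ^ 2) := by
      simpa using ((hasDerivAt_id (‖x‖^2)).const_mul a).const_add 1
    exact (hin.log hpos.ne').const_mul (-2)
  have h3 := h2.comp_hasFDerivAt x h1
  rw [hasFDerivAt_iff_hasGradientAt] at h3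
  convert h3 using 1
  · rfl
  apply (InnerProductSpace.toDual ℝ E2).injective
  rw [LinearIsometryEquiv.apply_symm_apply]
  ext y
  simp [real_inner_smul_left, ContinuousLinearMap.smul_apply, smul_eq_mul]
  ring

lemma ftc_part (a : ℝ) (ha : 0 < a) (R : ℝ) (hR : 0 < R) :
    ∫ r in (0:ℝ)..R, r * (16 * a ^ 2 * r ^ 2 / (1 + a * r ^ 2) ^ 2)
      = 16 * (Real.log (1 + a * R ^ 2) + (1 + a * R ^ 2)⁻¹ - 1) / 2 := by
  have key : ∀ r : ℝ, HasDerivAt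
      (fun r : ℝ => 8 * (Real.log (1 + a * r ^ 2) + (1 + a * r ^ 2)⁻¹))
      (r * (16 * a ^ 2 * r ^ 2 / (1 + a * r ^ 2) ^ 2)) r := by
    intro r
    have hpos : (0:ℝ) < 1 + a * r ^ 2 := by positivity
    have hin : HasDerivAt (fun r : ℝ => 1 + a * r ^ 2) (a * (2 * r)) r := by
      simpa using ((hasDerivAt_pow 2 r).const_mul a).const_add 1
    have h1 := (hin.log hpos.ne')
    have h2 := hin.inv hpos.ne'
    have := ((h1.add h2).const_mul 8)
    convert this using 1
    · rfl
    · rfl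
    · rfl
    field_simp
    ring
  have hcont : Continuous fun r : ℝ => r * (16 * a ^ 2 * r ^ 2 / (1 + a * r ^ 2) ^ 2) := by
    apply continuous_id.mul
    apply Continuous.div (by continuity) (by continuity)
    intro r; positivity
  rw [intervalIntegral.integral_eq_sub_of_hasDerivAt (fun r _ => key r)
    (hcont.intervalIntegrable 0 R)]
  simp
  ring

lemma ball_integral (a : ℝ) (ha : 0 < a) (R : ℝ) (hR : 0 < R) :
    ∫ x in Metric.ball (0 : E2) R, 16 * a ^ 2 * ‖x‖ ^ 2 / (1 + a * ‖x‖ ^ 2) ^ 2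
      = 16 * π * (Real.log (1 + a * R ^ 2) + (1 + a * R ^ 2)⁻¹ - 1) := by
  set g : ℝ → ℝ := fun r => 16 * a ^ 2 * r ^ 2 / (1 + a * r ^ 2) ^ 2 with hg
  set f : ℝ → ℝ := Set.indicator (Set.Iio R) g with hf
  have step1 : (∫ x in Metric.ball (0 : E2) R, g ‖x‖) = ∫ x : E2, f ‖x‖ := by
    rw [← MeasureTheory.integral_indicator measurableSet_ball]
    congr 1
    funext x
    by_cases hx : ‖x‖ < R
    · simp [hf, Set.indicator, hx, Metric.mem_ball, dist_zero_right]
    · simp [hf, Set.indicator, hx, Metric.mem_ball, dist_zero_right]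
  have step2 := MeasureTheory.integral_fun_norm_addHaar (volume : Measure E2) f
  have hdim : Module.finrank ℝ E2 = 2 := by simp [finrank_euclideanSpace]
  have hvol : ((volume : Measure E2) (Metric.ball 0 1)).toReal = π := by
    rw [EuclideanSpace.volume_ball]
    simp [Real.Gamma_two, Real.sq_sqrt Real.pi_nonneg]
    rw [show (1:ℝ)+1 = 2 by norm_num, Real.Gamma_two, div_one,
      ENNReal.toReal_ofReal Real.pi_nonneg]
  rw [hdim, measureReal_def, hvol] at step2
  have step3 : (∫ y in Set.Ioi (0:ℝ), y ^ (2 - 1) • f y)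
      = ∫ r in (0:ℝ)..R, r * g r := by
    have : (fun y : ℝ => y ^ (2-1) • f y) = Set.indicator (Set.Iio R) (fun y => y * g y) := by
      funext y
      by_cases hy : y < R
      · simp [hf, Set.indicator, hy]
      · simp [hf, Set.indicator, hy]
    rw [this, MeasureTheory.setIntegral_indicator measurableSet_Iio]
    have : Set.Ioi (0:ℝ) ∩ Set.Iio R = Set.Ioo 0 R := rfl
    rw [this, intervalIntegral.integral_of_le hR.le, ← MeasureTheory.integral_Ioc_eq_integral_Ioo]
  rw [step1, step2, step3, ftc_part a ha R hR]
  simp only [nsmul_eq_mul, smul_eq_mul]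
  push_cast
  ring

/-- As `R → ∞`, `∫_{B_R(0)} ‖∇φ₀‖² dx - 16π log(1 + πhR²) → -16π`, where
`φ₀(x) = -2 log(1 + πh‖x‖²)` and `h > 0`. -/
theorem dirichlet_energy_bubble_asymptotic (h : ℝ) (hh : 0 < h) :
    Tendsto (fun R : ℝ =>
      (∫ x in Metric.ball (0 : EuclideanSpace ℝ (Fin 2)) R,
        ‖gradient (fun y : EuclideanSpace ℝ (Fin 2) =>
            -2 * Real.log (1 + π * h * ‖y‖ ^ 2)) x‖ ^ 2)
        - 16 * π * Real.log (1 + π * h * R ^ 2))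
      atTop (nhds (-16 * π)) := by
  set a : ℝ := π * h with hadef
  have ha : 0 < a := by positivity
  have hgrad : ∀ x : E2,
      ‖gradient (fun y : E2 => -2 * Real.log (1 + a * ‖y‖ ^ 2)) x‖ ^ 2
        = 16 * a ^ 2 * ‖x‖ ^ 2 / (1 + a * ‖x‖ ^ 2) ^ 2 := by
    intro x
    have hpos : (0:ℝ) < 1 + a * ‖x‖ ^ 2 := by positivity
    rw [(grad_bubble a ha x).gradient, norm_smul]
    rw [mul_pow, Real.norm_eq_abs, sq_abs]
    field_simp
    ring
  have heq : ∀ᶠ R in atTop, (∫ x in Metric.ball (0 : E2) R,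
        ‖gradient (fun y : E2 => -2 * Real.log (1 + a * ‖y‖ ^ 2)) x‖ ^ 2)
        - 16 * π * Real.log (1 + a * R ^ 2)
      = 16 * π * (1 + a * R ^ 2)⁻¹ - 16 * π := by
    filter_upwards [eventually_gt_atTop (0:ℝ)] with R hR
    have : (∫ x in Metric.ball (0 : E2) R,
        ‖gradient (fun y : E2 => -2 * Real.log (1 + a * ‖y‖ ^ 2)) x‖ ^ 2)
        = ∫ x in Metric.ball (0 : E2) R, 16 * a ^ 2 * ‖x‖ ^ 2 / (1 + a * ‖x‖ ^ 2) ^ 2 := by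
      apply MeasureTheory.setIntegral_congr_fun measurableSet_ball
      intro x _
      exact hgrad x
    rw [this, ball_integral a ha R hR]
    ring
  have hlim : Tendsto (fun R : ℝ => 16 * π * (1 + a * R ^ 2)⁻¹ - 16 * π) atTop
      (nhds (-16 * π)) := by
    have h1 : Tendsto (fun R : ℝ => 1 + a * R ^ 2) atTop atTop := by
      apply tendsto_atTop_add_const_left
      exact (tendsto_pow_atTop (by norm_num)).const_mul_atTop ha
    have h2 := (h1.inv_tendsto_atTop).const_mul (16 * π)
    have := h2.sub_const (16 * π)
    simpa using this
  exact hlim.congr' (heq.mono fun R hR => hR.symm)
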